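/- Let Δ > 0, y ∈ ℝ, and let v : ℝ → ℝ be three times continuously differentiable with |v'''(s)| ≤ M for all s ∈ [y − Δ/2, y + Δ/2]. Then for all A, B ∈ ℝ: |((v(y + Δ/2) − v(y))/Δ)·A + ((v(y) − v(y − Δ/2))/Δ)·B − v'(y)·(A + B)/2 − v''(y)·Δ·(A − B)/8| ≤ (M·Δ²/48)·(|A| + |B|). -/

import Mathlib

open Set

/-- Within-iterated-derivative equals the global one for globally smooth functions on a
set with unique differentiability. -/
lemma iDW_eq_iD {f : ℝ → ℝ} {n m : ℕ} (hf : ContDiff ℝ n f) {s : Set ℝ}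
    (hs : UniqueDiffOn ℝ s) {x : ℝ} (hx : x ∈ s) (hm : m ≤ n) :
    iteratedDerivWithin m f s x = iteratedDeriv m f x := by
  have h := (contDiff_iff_ftaylorSeries.mp hf).hasFTaylorSeriesUpToOn s
  have h2 := h.eq_iteratedFDerivWithin_of_uniqueDiffOn (m := m) (by exact_mod_cast hm) hs hx
  rw [iteratedDerivWithin_eq_iteratedFDerivWithin, iteratedDeriv_eq_iteratedFDeriv, ← h2]
  rfl

/-- One-sided third-order Taylor bound. -/
lemma taylor3_bound {f : ℝ → ℝ} (hf : ContDiff ℝ 3 f) (y h M : ℝ) (h0 : 0 ≤ h)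
    (hM : ∀ s ∈ Icc y (y + h), |iteratedDeriv 3 f s| ≤ M) :
    |f (y + h) - f y - deriv f y * h - iteratedDeriv 2 f y * h ^ 2 / 2| ≤ M * h ^ 3 / 6 := by
  rcases eq_or_lt_of_le h0 with hz | hpos
  · simp [← hz]
  have hab : y ≤ y + h := by linarith
  have hlt : y < y + h := by linarith
  have hf' : DifferentiableOn ℝ (iteratedDerivWithin 2 f (Icc y (y + h))) (Ioo y (y + h)) := by
    have : DifferentiableOn ℝ (iteratedDeriv 2 f) (Ioo y (y + h)) :=
      (hf.differentiable_iteratedDeriv 2 (by norm_num)).differentiableOn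
    refine this.congr fun s hs => ?_
    exact iDW_eq_iD hf (uniqueDiffOn_Icc hlt) (Ioo_subset_Icc_self hs) (by norm_num)
  obtain ⟨x', hx', key⟩ := taylor_mean_remainder_lagrange (n := 2) hlt.ne
    (by rw [uIcc_of_le hab]; exact hf.contDiffOn.of_le (by norm_num))
    (by rw [uIcc_of_le hab, uIoo_of_le hab]; exact hf')
  rw [uIoo_of_le hab] at hx'
  rw [uIcc_of_le hab] at key
  rw [iDW_eq_iD hf (uniqueDiffOn_Icc hlt) (Ioo_subset_Icc_self hx') le_rfl] at key
  have htay : taylorWithinEval f 2 (Icc y (y + h)) y (y + h)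
      = f y + deriv f y * h + iteratedDeriv 2 f y * h ^ 2 / 2 := by
    rcases eq_or_lt_of_le hab with heq | hlt
    · have hh : h = 0 := by linarith
      simp [hh]
    · have hu := uniqueDiffOn_Icc hlt
      have hy : y ∈ Icc y (y + h) := left_mem_Icc.mpr hab
      rw [show (2 : ℕ) = 1 + 1 from rfl, taylorWithinEval_succ, taylorWithinEval_succ,
        taylor_within_zero_eval]
      rw [iDW_eq_iD hf hu hy (by norm_num), iDW_eq_iD hf hu hy (by norm_num),
        iteratedDeriv_one]
      simp [Nat.factorial, smul_eq_mul]
      ring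
  rw [htay] at key
  have heq : f (y + h) - f y - deriv f y * h - iteratedDeriv 2 f y * h ^ 2 / 2
      = iteratedDeriv 3 f x' * h ^ 3 / 6 := by
    have hfact : (((2+1).factorial : ℕ) : ℝ) = 6 := by norm_num [Nat.factorial]
    rw [hfact, show y + h - y = h by ring] at key
    linarith [key]
  rw [heq, abs_div]
  have h3 : |iteratedDeriv 3 f x' * h ^ 3| ≤ M * h ^ 3 := by
    rw [abs_mul, abs_pow, abs_of_nonneg h0]
    have := hM x' (Ioo_subset_Icc_self hx')
    have hM0 : 0 ≤ M := le_trans (abs_nonneg _) this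
    exact mul_le_mul_of_nonneg_right this (by positivity)
  rw [abs_of_nonneg (by norm_num : (0:ℝ) ≤ 6)]
  linarith [h3]

/-- Two-sided third-order Taylor bound (left side). -/
lemma taylor3_bound_left {f : ℝ → ℝ} (hf : ContDiff ℝ 3 f) (y h M : ℝ) (h0 : 0 ≤ h)
    (hM : ∀ s ∈ Icc (y - h) y, |iteratedDeriv 3 f s| ≤ M) :
    |f (y - h) - f y + deriv f y * h - iteratedDeriv 2 f y * h ^ 2 / 2| ≤ M * h ^ 3 / 6 := by
  set g : ℝ → ℝ := fun t => f (-t) with hg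
  have hgc : ContDiff ℝ 3 g := hf.comp (contDiff_neg)
  have hMg : ∀ s ∈ Icc (-y) (-y + h), |iteratedDeriv 3 g s| ≤ M := by
    intro s hs
    rw [iteratedDeriv_comp_neg]
    simp only [smul_eq_mul]
    rw [abs_mul]
    simp only [abs_pow, abs_neg, abs_one, one_pow, one_mul]
    exact hM (-s) ⟨by linarith [hs.2], by linarith [hs.1]⟩
  have key := taylor3_bound hgc (-y) h M h0 hMg
  have e0 : g (-y + h) = f (y - h) := by simp [hg]; ring_nf
  have e1 : g (-y) = f y := by simp [hg]
  have e2 : deriv g (-y) = -deriv f y := by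
    have := iteratedDeriv_comp_neg 1 f (-y)
    simp only [iteratedDeriv_one] at this
    rw [show deriv g = deriv (fun x => f (-x)) from rfl, this]
    simp
  have e3 : iteratedDeriv 2 g (-y) = iteratedDeriv 2 f y := by
    have := iteratedDeriv_comp_neg 2 f (-y)
    rw [show iteratedDeriv 2 g = iteratedDeriv 2 (fun x => f (-x)) from rfl, this]
    simp
  rw [e0, e1, e2, e3] at key
  convert key using 2
  ring


/-- (Key Taylor-expansion identity in the proof of Theorem 2.2.) Let
`Δ > 0`, `y ∈ ℝ`, and let `v : ℝ → ℝ` be three times continuously differentiable with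
`|v'''(s)| ≤ M` for all `s ∈ [y − Δ/2, y + Δ/2]`. Then for all `A, B ∈ ℝ`:
`|((v(y+Δ/2) − v(y))/Δ)·A + ((v(y) − v(y−Δ/2))/Δ)·B − v'(y)·(A+B)/2 − v''(y)·Δ·(A−B)/8|`
`≤ (M·Δ²/48)·(|A| + |B|)`. -/
theorem staggered_taylor_identity (Δ : ℝ) (hΔ : 0 < Δ) (y M : ℝ) (v : ℝ → ℝ)
    (hv : ContDiff ℝ 3 v)
    (hM : ∀ s ∈ Set.Icc (y - Δ / 2) (y + Δ / 2), |iteratedDeriv 3 v s| ≤ M) :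
    ∀ A B : ℝ,
      |((v (y + Δ / 2) - v y) / Δ) * A + ((v y - v (y - Δ / 2)) / Δ) * B -
          deriv v y * (A + B) / 2 - iteratedDeriv 2 v y * Δ * (A - B) / 8| ≤
        M * Δ ^ 2 / 48 * (|A| + |B|) := by
  intro A B
  set h : ℝ := Δ / 2 with hh
  have h0 : 0 ≤ h := by positivity
  have hR1 := taylor3_bound hv y h M h0 (fun s hs => hM s ⟨by simp [hh] at hs ⊢; linarith [hs.1], by simpa [hh] using hs.2⟩)
  have hR2 := taylor3_bound_left hv y h M h0 (fun s hs => hM s ⟨by simpa [hh] using hs.1, by simp [hh] at hs ⊢; linarith [hs.2]⟩)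
  set R1 := v (y + h) - v y - deriv v y * h - iteratedDeriv 2 v y * h ^ 2 / 2 with hR1def
  set R2 := v (y - h) - v y + deriv v y * h - iteratedDeriv 2 v y * h ^ 2 / 2 with hR2def
  have hΔne : Δ ≠ 0 := ne_of_gt hΔ
  have hexpr : ((v (y + Δ / 2) - v y) / Δ) * A + ((v y - v (y - Δ / 2)) / Δ) * B -
          deriv v y * (A + B) / 2 - iteratedDeriv 2 v y * Δ * (A - B) / 8
        = (R1 * A - R2 * B) / Δ := by
    rw [hR1def, hR2def, hh]
    field_simp
    ring
  rw [hexpr, abs_div, abs_of_pos hΔ]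
  rw [div_le_iff₀ hΔ]
  have hb : |R1 * A - R2 * B| ≤ M * h ^ 3 / 6 * (|A| + |B|) := by
    calc |R1 * A - R2 * B| ≤ |R1 * A| + |R2 * B| := abs_sub _ _
      _ = |R1| * |A| + |R2| * |B| := by rw [abs_mul, abs_mul]
      _ ≤ M * h ^ 3 / 6 * |A| + M * h ^ 3 / 6 * |B| := by
          gcongr <;> first | exact hR1 | exact hR2
      _ = M * h ^ 3 / 6 * (|A| + |B|) := by ring
  refine hb.trans (le_of_eq ?_)
  rw [hh]
  ring
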